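/- Let p, q be probability distributions on [n] with ε ∈ (0,1] and A = {i : q_i ≥ ε/(50n)}. If d_TV(p,q) ≥ ε, then ∑_{i∈A} (p_i - q_i)²/q_i ≥ ε²/5. -/

import Mathlib

open Finset

/-- If `d_TV(p,q) ≥ ε` then the chi-squared statistic restricted to
`A = {i : q_i ≥ ε/(50n)}` is at least `ε²/5`. -/
theorem chi_sq_restricted_large (n : ℕ) (p q : Fin n → ℝ) (ε : ℝ)
    (hε : 0 < ε ∧ ε ≤ 1)
    (hp0 : ∀ i, 0 ≤ p i) (hq0 : ∀ i, 0 ≤ q i)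
    (hp1 : ∑ i, p i = 1) (hq1 : ∑ i, q i = 1)
    (hfar : ε ≤ (1 / 2) * ∑ i, |p i - q i|) :
    ε ^ 2 / 5 ≤
      ∑ i ∈ Finset.univ.filter (fun i => ε / (50 * n) ≤ q i), (p i - q i) ^ 2 / q i := by
  obtain ⟨hε0, hε1⟩ := hε
  have hn : 0 < n := by
    rcases Nat.eq_zero_or_pos n with h | h
    · subst h; simp at hp1
    · exact h
  set A : Finset (Fin n) := Finset.univ.filter (fun i => ε / (50 * n) ≤ q i) with hA
  -- q(Aᶜ) ≤ ε/50
  have hqAc : ∑ i ∈ Aᶜ, q i ≤ ε / 50 := by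
    have h1 : ∑ i ∈ Aᶜ, q i ≤ ∑ i ∈ Aᶜ, ε / (50 * n) := by
      apply Finset.sum_le_sum
      intro i hi
      have : ¬ (ε / (50 * n) ≤ q i) := by
        simpa [hA] using hi
      linarith
    have h2 : (Aᶜ.card : ℝ) ≤ n := by
      exact_mod_cast Finset.card_le_card (Finset.subset_univ _) |>.trans_eq (by simp)
    have h3 : ∑ i ∈ Aᶜ, ε / (50 * n) = Aᶜ.card * (ε / (50 * n)) := by
      simp [Finset.sum_const, nsmul_eq_mul]
    have hnpos : (0:ℝ) < n := by exact_mod_cast hn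
    have h4 : (Aᶜ.card : ℝ) * (ε / (50 * n)) ≤ n * (ε / (50 * n)) := by
      apply mul_le_mul_of_nonneg_right h2
      positivity
    have h5 : (n:ℝ) * (ε / (50 * n)) = ε / 50 := by
      field_simp
    linarith
  have hsplit : ∀ f : Fin n → ℝ, ∑ i, f i = ∑ i ∈ A, f i + ∑ i ∈ Aᶜ, f i := by
    intro f
    rw [Finset.sum_add_sum_compl]
  have hsumpq : ∑ i ∈ A, (p i - q i) + ∑ i ∈ Aᶜ, (p i - q i) = 0 := by
    rw [← hsplit]
    simp [Finset.sum_sub_distrib, hp1, hq1]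
  -- ∑_{Aᶜ} |p-q| ≤ ∑_A |p-q| + 2 q(Aᶜ)
  have habsAc : ∑ i ∈ Aᶜ, |p i - q i| ≤ ∑ i ∈ A, |p i - q i| + 2 * (ε/50) := by
    have h1 : ∑ i ∈ Aᶜ, |p i - q i| ≤ ∑ i ∈ Aᶜ, ((p i - q i) + 2 * q i) := by
      apply Finset.sum_le_sum
      intro i _
      rcases abs_cases (p i - q i) with ⟨h, _⟩ | ⟨h, _⟩ <;>
        [linarith [hq0 i]; linarith [hp0 i]]
    have h2 : ∑ i ∈ Aᶜ, ((p i - q i) + 2 * q i)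
        = ∑ i ∈ Aᶜ, (p i - q i) + 2 * ∑ i ∈ Aᶜ, q i := by
      rw [Finset.sum_add_distrib, Finset.mul_sum]
    have h3 : ∑ i ∈ Aᶜ, (p i - q i) ≤ ∑ i ∈ A, |p i - q i| := by
      have : ∑ i ∈ Aᶜ, (p i - q i) = -∑ i ∈ A, (p i - q i) := by linarith
      rw [this]
      calc -∑ i ∈ A, (p i - q i) ≤ |∑ i ∈ A, (p i - q i)| := neg_le_abs _
        _ ≤ ∑ i ∈ A, |p i - q i| := Finset.abs_sum_le_sum_abs _ _
    linarith
  -- ∑_A |p-q| ≥ 49 ε / 50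
  have hSA : 49 * ε / 50 ≤ ∑ i ∈ A, |p i - q i| := by
    have := hsplit (fun i => |p i - q i|)
    linarith
  -- q(A) ≤ 1
  have hqA1 : ∑ i ∈ A, q i ≤ 1 := by
    have := hsplit q
    have hnn : 0 ≤ ∑ i ∈ Aᶜ, q i := Finset.sum_nonneg fun i _ => hq0 i
    linarith
  have hqApos : 0 < ∑ i ∈ A, q i := by
    have := hsplit q
    linarith
  -- Sedrakyan
  have hCS : (∑ i ∈ A, |p i - q i|) ^ 2 / ∑ i ∈ A, q i ≤ ∑ i ∈ A, (p i - q i) ^ 2 / q i := by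
    have := Finset.sq_sum_div_le_sum_sq_div A (fun i => |p i - q i|)
      (g := q) (fun i hi => by
        have hle : ε / (50 * n) ≤ q i := by simpa [hA] using hi
        have hnpos : (0:ℝ) < n := by exact_mod_cast hn
        have : (0:ℝ) < ε / (50 * n) := by positivity
        linarith)
    simpa [sq_abs] using this
  have hfin : ε ^ 2 / 5 ≤ (∑ i ∈ A, |p i - q i|) ^ 2 / ∑ i ∈ A, q i := by
    rw [le_div_iff₀ hqApos]
    nlinarith [sq_nonneg (∑ i ∈ A, |p i - q i| - ε)]
  linarith
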